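/- Let $\mathcal{G}$ be a connected undirected graph with $n$ vertices, incidence-based Laplacian $L = A^\top A$ (where $A$ is the edge-vertex incidence matrix with entries $+1, -1$ per edge), and let $\alpha(\mathcal{G})$ be the smallest nonzero eigenvalue of $L$. Define $\beta(\mathcal{G})$ as the smallest nonnegative number $\beta$ such that $\sum_{(i,j)} (x_j - x_i)^2 \leq \beta \sum_{(i,j)\in\mathcal{E}} (x_j - x_i)^2$ for all $x \in \mathbb{R}^n$ (sum on the left over all unordered pairs of vertices, on the right over edges). Then $\beta(\mathcal{G}) = n / \alpha(\mathcal{G})$. -/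

import Mathlib

/-- Lemma 3 (β(𝒢) = n/α(𝒢)). The graph is given by its edges and signed
incidence matrix `A`; connectivity is encoded by the kernel of `A` being the
span of the all-ones vector; `α` is the smallest nonzero eigenvalue of the
Laplacian `L = Aᵀ A`; `β` is the least nonnegative constant such that the sum
of `(x_j - x_i)²` over all unordered pairs is bounded by `β` times the sum
over edges. -/
theorem stmt_6 (n m : ℕ) (hn : 1 ≤ n)
    (edges : Fin m → Fin n × Fin n)
    (hne : ∀ e, (edges e).1 ≠ (edges e).2)
    (A : Matrix (Fin m) (Fin n) ℝ)
    (hA : ∀ e i, A e i =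
      if i = (edges e).1 then 1 else if i = (edges e).2 then -1 else 0)
    (hconn : ∀ x : Fin n → ℝ, A.mulVec x = 0 ↔ ∃ t : ℝ, x = fun _ => t)
    (L : Matrix (Fin n) (Fin n) ℝ) (hL : L = A.transpose * A)
    (α : ℝ) (hα0 : α ≠ 0)
    (hαeig : ∃ v : Fin n → ℝ, v ≠ 0 ∧ L.mulVec v = α • v)
    (hαmin : ∀ μ : ℝ, μ ≠ 0 → (∃ v : Fin n → ℝ, v ≠ 0 ∧ L.mulVec v = μ • v) → α ≤ μ)
    (β : ℝ)
    (hβ : IsLeast {b : ℝ | 0 ≤ b ∧ ∀ x : Fin n → ℝ,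
        (1 / 2) * ∑ i, ∑ j, (x j - x i)^2 ≤
          b * ∑ e, (x (edges e).2 - x (edges e).1)^2} β) :
    β = (n : ℝ) / α := by
  classical
  -- entries of `A *ᵥ x`
  have hAx : ∀ (x : Fin n → ℝ) (e : Fin m),
      A.mulVec x e = x (edges e).1 - x (edges e).2 := by
    intro x e
    have h1 : ∀ i : Fin n, A e i * x i =
        (if i = (edges e).1 then x i else 0) + (if i = (edges e).2 then -x i else 0) := by
      intro i
      rw [hA]
      by_cases h1 : i = (edges e).1 <;> by_cases h2 : i = (edges e).2 <;>
        simp [h1, h2, hne e, (hne e).symm]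
    simp only [Matrix.mulVec, dotProduct, h1, Finset.sum_add_distrib,
      Finset.sum_ite_eq', Finset.mem_univ, if_true]
    ring
  -- the quadratic form of `L` in terms of edge differences
  have hQ : ∀ x : Fin n → ℝ,
      dotProduct x (L.mulVec x) = ∑ e, (x (edges e).2 - x (edges e).1)^2 := by
    intro x
    rw [hL, ← Matrix.mulVec_mulVec, Matrix.dotProduct_mulVec, Matrix.vecMul_transpose]
    simp only [dotProduct, hAx]
    exact Finset.sum_congr rfl fun e _ => by ring
  -- the quadratic form of `L` as a sum of squares
  have hQA : ∀ x : Fin n → ℝ,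
      dotProduct x (L.mulVec x) = ∑ e, (A.mulVec x e)^2 := by
    intro x
    rw [hQ x]
    exact Finset.sum_congr rfl fun e _ => by rw [hAx]; ring
  -- the left-hand side identity
  have hLHS : ∀ x : Fin n → ℝ,
      (1/2 : ℝ) * ∑ i, ∑ j, (x j - x i)^2
        = n * (∑ i, (x i)^2) - (∑ i, x i)^2 := by
    intro x
    set S1 := ∑ i, x i with hS1
    set S2 := ∑ i, (x i)^2 with hS2
    have h1 : ∀ i : Fin n, ∑ j, (x j - x i)^2 = S2 + n * (x i)^2 - 2 * S1 * x i := by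
      intro i
      have : ∀ j : Fin n, (x j - x i)^2 = (x j)^2 + (x i)^2 - 2 * x i * x j := fun j => by ring
      rw [Finset.sum_congr rfl fun j _ => this j]
      rw [Finset.sum_sub_distrib, Finset.sum_add_distrib, Finset.sum_const, ← Finset.mul_sum]
      simp [Finset.card_univ, nsmul_eq_mul, hS1, hS2]
      ring
    rw [Finset.sum_congr rfl fun i _ => h1 i]
    rw [Finset.sum_sub_distrib, Finset.sum_add_distrib, Finset.sum_const, ← Finset.mul_sum,
      ← Finset.mul_sum, Finset.card_univ, Fintype.card_fin, nsmul_eq_mul, ← hS1, ← hS2]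
    ring
  -- positivity of sums of squares of nonzero vectors
  have hsumsq_pos : ∀ v : Fin n → ℝ, v ≠ 0 → 0 < ∑ i, (v i)^2 := by
    intro v hv
    have h1 : ∃ i, v i ≠ 0 := by
      by_contra h; push_neg at h; exact hv (funext h)
    obtain ⟨i, hi⟩ := h1
    have h2 := Finset.single_le_sum (f := fun j => (v j)^2)
      (fun j _ => sq_nonneg (v j)) (Finset.mem_univ i)
    have h3 : 0 < (v i)^2 := by positivity
    linarith
  -- quadratic form at an eigenvector
  have hQeig : ∀ (v : Fin n → ℝ) (μ : ℝ), L.mulVec v = μ • v →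
      dotProduct v (L.mulVec v) = μ * ∑ i, (v i)^2 := by
    intro v μ hv
    rw [hv]
    simp only [dotProduct, Pi.smul_apply, smul_eq_mul, Finset.mul_sum]
    exact Finset.sum_congr rfl fun i _ => by ring
  -- α is positive
  have hαpos : 0 < α := by
    obtain ⟨v, hv0, hv⟩ := hαeig
    have h1 := hQeig v α hv
    have h2 : 0 ≤ dotProduct v (L.mulVec v) := by
      rw [hQA v]; positivity
    have hS := hsumsq_pos v hv0
    have h3 : 0 ≤ α := by nlinarith
    exact lt_of_le_of_ne h3 (Ne.symm hα0)
  -- key spectral inequality on the hyperplane orthogonal to the all-ones vector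
  have key : ∀ y : Fin n → ℝ, (∑ i, y i) = 0 →
      α * ∑ i, (y i)^2 ≤ dotProduct y (L.mulVec y) := by
    intro y hy
    have hH : L.IsHermitian := by
      rw [hL]
      simpa [Matrix.conjTranspose_eq_transpose_of_trivial] using
        Matrix.isHermitian_conjTranspose_mul_self A
    set u := hH.eigenvectorBasis with hu
    set lam := hH.eigenvalues with hlam
    set z : EuclideanSpace ℝ (Fin n) := WithLp.toLp 2 y with hz
    set c : Fin n → ℝ := fun k => u.repr z k with hc
    have hrepr : ∀ i, y i = ∑ k, c k * (u k) i := by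
      intro i
      have h2 := congrArg (fun w : EuclideanSpace ℝ (Fin n) => w i) (u.sum_repr z)
      calc y i = z i := rfl
        _ = ∑ k, c k * (u k) i := by
            rw [← h2]
            simp [c, WithLp.ofLp_sum, smul_eq_mul]
    have hck : ∀ k, ∑ i, (u k) i * y i = c k := by
      intro k
      show _ = u.repr z k
      rw [u.repr_apply_apply]
      simp [PiLp.inner_apply, RCLike.inner_apply, conj_trivial, hz]
      exact Finset.sum_congr rfl fun i _ => mul_comm _ _
    have heig : ∀ k, L.mulVec (u k) = lam k • (u k : Fin n → ℝ) :=
      fun k => hH.mulVec_eigenvectorBasis k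
    have hker : ∀ k, lam k = 0 → c k = 0 := by
      intro k hk
      have h0 : dotProduct (u k : Fin n → ℝ) (L.mulVec (u k)) = 0 := by
        rw [heig k, hk]; simp
      have h1 : A.mulVec (u k) = 0 := by
        rw [hQA] at h0
        funext e
        have := (Finset.sum_eq_zero_iff_of_nonneg
          (fun e _ => sq_nonneg (A.mulVec (u k) e))).mp h0 e (Finset.mem_univ e)
        simpa [pow_eq_zero_iff] using this
      obtain ⟨t, ht⟩ := (hconn _).mp h1
      rw [← hck k]
      have : ∀ i : Fin n, (u k) i = t := fun i => congrFun ht i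
      simp only [this, ← Finset.mul_sum, hy, mul_zero]
    have hαle : ∀ k, lam k ≠ 0 → α ≤ lam k := by
      intro k hk
      refine hαmin _ hk ⟨u k, ?_, heig k⟩
      intro h0
      exact u.orthonormal.ne_zero k (by ext i; exact congrFun h0 i)
    have hsum1 : ∑ i, (y i)^2 = ∑ k, (c k)^2 := by
      calc ∑ i, (y i)^2 = ∑ i, ∑ k, c k * ((u k) i * y i) := by
            refine Finset.sum_congr rfl fun i _ => ?_
            calc (y i)^2 = y i * y i := sq (y i) ▸ by ring
              _ = (∑ k, c k * (u k) i) * y i := by rw [← hrepr i]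
              _ = ∑ k, c k * ((u k) i * y i) := by
                  rw [Finset.sum_mul]; exact Finset.sum_congr rfl fun k _ => by ring
        _ = ∑ k, ∑ i, c k * ((u k) i * y i) := Finset.sum_comm
        _ = ∑ k, (c k)^2 := by
            refine Finset.sum_congr rfl fun k _ => ?_
            rw [← Finset.mul_sum, hck k]; ring
    have hLy : ∀ i, L.mulVec y i = ∑ k, c k * (lam k * (u k) i) := by
      intro i
      calc L.mulVec y i = ∑ j, L i j * y j := rfl
        _ = ∑ j, ∑ k, c k * (L i j * (u k) j) := by
            refine Finset.sum_congr rfl fun j _ => ?_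
            rw [hrepr j, Finset.mul_sum]
            exact Finset.sum_congr rfl fun k _ => by ring
        _ = ∑ k, ∑ j, c k * (L i j * (u k) j) := Finset.sum_comm
        _ = ∑ k, c k * (lam k * (u k) i) := by
            refine Finset.sum_congr rfl fun k _ => ?_
            rw [← Finset.mul_sum]
            congr 1
            have := congrFun (heig k) i
            simpa [Matrix.mulVec, dotProduct, Pi.smul_apply, smul_eq_mul] using this
    have hsum2 : dotProduct y (L.mulVec y) = ∑ k, lam k * (c k)^2 := by
      calc dotProduct y (L.mulVec y) = ∑ i, y i * L.mulVec y i := rfl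
        _ = ∑ i, ∑ k, (c k * lam k) * ((u k) i * y i) := by
            refine Finset.sum_congr rfl fun i _ => ?_
            rw [hLy i, Finset.mul_sum]
            exact Finset.sum_congr rfl fun k _ => by ring
        _ = ∑ k, ∑ i, (c k * lam k) * ((u k) i * y i) := Finset.sum_comm
        _ = ∑ k, lam k * (c k)^2 := by
            refine Finset.sum_congr rfl fun k _ => ?_
            rw [← Finset.mul_sum, hck k]; ring
    rw [hsum1, hsum2, Finset.mul_sum]
    refine Finset.sum_le_sum fun k _ => ?_
    by_cases hk : lam k = 0
    · rw [hk, hker k hk]; simp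
    · exact mul_le_mul_of_nonneg_right (hαle k hk) (sq_nonneg _)
  -- n/α is an admissible constant
  have hmem : ((n : ℝ) / α) ∈ {b : ℝ | 0 ≤ b ∧ ∀ x : Fin n → ℝ,
      (1 / 2) * ∑ i, ∑ j, (x j - x i)^2 ≤
        b * ∑ e, (x (edges e).2 - x (edges e).1)^2} := by
    refine ⟨div_nonneg (Nat.cast_nonneg n) hαpos.le, fun x => ?_⟩
    have hn0 : (n : ℝ) ≠ 0 := by
      have : (0:ℝ) < n := by exact_mod_cast hn
      exact ne_of_gt this
    set s : ℝ := (∑ i, x i) / n with hs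
    set y : Fin n → ℝ := fun i => x i - s with hyd
    have hsn : (n : ℝ) * s = ∑ i, x i := by
      rw [hs]; field_simp
    have hys : ∑ i, y i = 0 := by
      simp only [hyd]
      rw [Finset.sum_sub_distrib, Finset.sum_const, Finset.card_univ, Fintype.card_fin,
        nsmul_eq_mul]
      rw [← hsn]; ring
    have hQxy : dotProduct x (L.mulVec x) = dotProduct y (L.mulVec y) := by
      rw [hQ x, hQ y]
      exact Finset.sum_congr rfl fun e _ => by simp only [hyd]; ring
    have hy2 : (n : ℝ) * ∑ i, (y i)^2 = n * (∑ i, (x i)^2) - (∑ i, x i)^2 := by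
      have h1 : ∑ i, (y i)^2 = ∑ i, ((x i)^2 - 2*s*x i + s^2) := by
        refine Finset.sum_congr rfl fun i _ => ?_
        simp only [hyd]; ring
      rw [h1, Finset.sum_add_distrib, Finset.sum_sub_distrib, ← Finset.mul_sum,
        Finset.sum_const, Finset.card_univ, Fintype.card_fin, nsmul_eq_mul]
      linear_combination ((n:ℝ) * s - ∑ i, x i) * hsn
    have h1 := key y hys
    rw [hLHS x, ← hQ x]
    calc (n:ℝ) * (∑ i, (x i)^2) - (∑ i, x i)^2 = (n:ℝ) * ∑ i, (y i)^2 := hy2.symm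
      _ = ((n:ℝ)/α) * (α * ∑ i, (y i)^2) := by field_simp
      _ ≤ ((n:ℝ)/α) * dotProduct y (L.mulVec y) :=
          mul_le_mul_of_nonneg_left h1 (div_nonneg (Nat.cast_nonneg n) hαpos.le)
      _ = ((n:ℝ)/α) * dotProduct x (L.mulVec x) := by rw [hQxy]
  -- β ≤ n/α
  have hle : β ≤ (n : ℝ) / α := hβ.2 hmem
  -- n/α ≤ β via the eigenvector of α
  have hge : (n : ℝ) / α ≤ β := by
    obtain ⟨v, hv0, hv⟩ := hαeig
    have hA1 : A.mulVec (fun _ => (1:ℝ)) = 0 := (hconn _).mpr ⟨1, rfl⟩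
    have hL1 : L.mulVec (fun _ => (1:ℝ)) = 0 := by
      rw [hL, ← Matrix.mulVec_mulVec, hA1]
      simp
    have hsv : ∑ i, v i = 0 := by
      have h1 : dotProduct (fun _ => (1:ℝ)) (L.mulVec v) = α * ∑ i, v i := by
        rw [hv]
        simp only [dotProduct, Pi.smul_apply, smul_eq_mul, one_mul, Finset.mul_sum]
      have hsym : L.transpose = L := by
        rw [hL]; simp [Matrix.transpose_mul]
      have h2 : dotProduct (fun _ => (1:ℝ)) (L.mulVec v) = 0 := by
        rw [Matrix.dotProduct_mulVec]
        have h3 : Matrix.vecMul (fun _ => (1:ℝ)) L = 0 := by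
          rw [← hsym, Matrix.vecMul_transpose, hL1]
        rw [h3, zero_dotProduct]
      have h4 : α * ∑ i, v i = 0 := h1.symm.trans h2
      exact (mul_eq_zero.mp h4).resolve_left hα0
    have hQv := hQeig v α hv
    have hineq := hβ.1.2 v
    rw [hLHS v, ← hQ v, hQv, hsv] at hineq
    have hvpos := hsumsq_pos v hv0
    rw [div_le_iff₀ hαpos]
    nlinarith [hineq, hvpos, hαpos, hβ.1.1]
  exact le_antisymm hle hge
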